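/- Let Σ₀ = {⋆}, Σ₂ = {ok, error}, A the one-state automaton with Δ(a₀) = {⋆, (ok, a₀, a₀)}, and the distance lifting induced by f(x,y) = ½x + ½y. Let E' be the set of nodes of T labelled error all of whose proper ancestors are labelled ok. Then (a₀, root, ε) is winning for Verifier in the ε-acceptance game if and only if ε ≥ Σ_{v ∈ E'} 2^{-|v|}. -/

import Mathlib

open unitInterval

instance : Fact ((0:ℝ) ≤ 1) := ⟨zero_le_one⟩

/-- Finite binary strings. -/
abbrev Word := List Bool

/-- A set of words is prefix-closed. -/
def PrefixClosed (U : Set Word) : Prop :=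
  ∀ ⦃w : Word⦄, w ∈ U → ∀ ⦃v : Word⦄, v <+: w → v ∈ U

/-- A set of words is sibling-closed. -/
def SiblingClosed (U : Set Word) : Prop :=
  ∀ w : Word, w ++ [false] ∈ U ↔ w ++ [true] ∈ U

/-- The distance lifting of `d` along the binary-tree functor
`F X = S0 ⊕ S2 × X × X`, induced by `f`. -/
def dlift {S0 S2 X Y : Type*} [DecidableEq S0] [DecidableEq S2]
    (f : I → I → I) (d : X → Y → I) :
    (S0 ⊕ S2 × X × X) → (S0 ⊕ S2 × Y × Y) → I
  | Sum.inl s, Sum.inl t => if s = t then 0 else 1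
  | Sum.inr (s, x1, x2), Sum.inr (t, y1, y2) =>
      if s = t then f (d x1 y1) (d x2 y2) else 1
  | _, _ => 1

/-- The relation lifting along the binary-tree functor. -/
def rlift {S0 S2 X Y : Type*} (R : X → Y → Prop) :
    (S0 ⊕ S2 × X × X) → (S0 ⊕ S2 × Y × Y) → Prop
  | Sum.inl s, Sum.inl t => s = t
  | Sum.inr (s, x1, x2), Sum.inr (t, y1, y2) => s = t ∧ R x1 y1 ∧ R x2 y2
  | _, _ => False

/-- A labelled binary tree: a prefix- and sibling-closed domain of words
containing the root, together with its successor function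
`γ : U → S0 ⊕ S2 × U × U` sending a branching node to its label and
its two children. -/
structure LTree (S0 S2 : Type*) where
  U : Set Word
  prefixClosed : PrefixClosed U
  siblingClosed : SiblingClosed U
  rootMem : ([] : Word) ∈ U
  γ : U → S0 ⊕ S2 × U × U
  γ_children : ∀ (w : U) (s : S2) (l r : U),
      γ w = Sum.inr (s, l, r) →
      (l : Word) = (w : Word) ++ [false] ∧ (r : Word) = (w : Word) ++ [true]

/-- The root of a labelled binary tree, as an element of its domain. -/
def LTree.root {S0 S2 : Type*} (T : LTree S0 S2) : T.U := ⟨[], T.rootMem⟩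

/-- A nondeterministic tree automaton (with acceptance condition `Acc = A^ω`,
i.e. every infinite run accepted). -/
structure NTA (S0 S2 : Type*) where
  A : Type*
  a0 : A
  Δ : A → Set (S0 ⊕ S2 × A × A)

/-- Deadlock freeness: every state has at least one transition. -/
def NTA.DeadlockFree {S0 S2 : Type*} (𝔸 : NTA S0 S2) : Prop :=
  ∀ a : 𝔸.A, (𝔸.Δ a).Nonempty

/-- Winning positions for Verifier in the (Boolean) acceptance game:
at `(a,w)` Verifier picks `δa ∈ Δ a` and a relation `R` with
`(δa, γ w) ∈ R̄`; Falsifier picks an element of `R`; infinite plays are won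
by Verifier. -/
def AccWin {S0 S2 : Type*} (𝔸 : NTA S0 S2) (T : LTree S0 S2)
    (p : 𝔸.A × T.U) : Prop :=
  ∃ S : Set (𝔸.A × T.U), p ∈ S ∧
    ∀ q ∈ S, ∃ δa ∈ 𝔸.Δ q.1, ∃ R : 𝔸.A → T.U → Prop,
      rlift R δa (T.γ q.2) ∧ ∀ (b : 𝔸.A) (v : T.U), R b v → (b, v) ∈ S

/-- Winning positions for Verifier in the ε-acceptance game:
at `(a,w,ε)` Verifier picks `δa ∈ Δ a` and `d : A × U → [0,1]` with
`d̄(δa, γ w) ≤ ε`; Falsifier picks `(b,v,ε')` with `d b v ≤ ε'`;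
infinite plays are won by Verifier. -/
def EAccWin {S0 S2 : Type*} [DecidableEq S0] [DecidableEq S2]
    (f : I → I → I) (𝔸 : NTA S0 S2) (T : LTree S0 S2)
    (p : 𝔸.A × T.U × I) : Prop :=
  ∃ S : Set (𝔸.A × T.U × I), p ∈ S ∧
    ∀ q ∈ S, ∃ δa ∈ 𝔸.Δ q.1, ∃ d : 𝔸.A → T.U → I,
      dlift f d δa (T.γ q.2.1) ≤ q.2.2 ∧
      ∀ (b : 𝔸.A) (v : T.U) (ε' : I), d b v ≤ ε' → (b, v, ε') ∈ S

/-- The lifting function `f(x,y) = ½x + ½y` on the unit interval. -/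
noncomputable def halfAdd (x y : I) : I :=
  ⟨(x : ℝ) / 2 + (y : ℝ) / 2,
    Set.mem_Icc.mpr ⟨by nlinarith [unitInterval.nonneg x, unitInterval.nonneg y],
      by nlinarith [unitInterval.le_one x, unitInterval.le_one y]⟩⟩

/-- Binary labels `ok` and `error`. -/
inductive Lab2 : Type
  | ok : Lab2
  | error : Lab2
deriving DecidableEq

/-- The one-state automaton with `S0 = {⋆}`, `S2 = {ok, error}` and
`Δ(a₀) = {⋆, (ok, a₀, a₀)}`. -/
def A2 : NTA Unit Lab2 where
  A := Unit
  a0 := ()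
  Δ := fun _ => {Sum.inl (), Sum.inr (Lab2.ok, (), ())}

/-- The set of minimal error nodes of `T`: nodes labelled `error` all of whose
strict prefixes are labelled `ok`. -/
def minimalError (T : LTree Unit Lab2) : Set T.U :=
  {v | (∃ l r : T.U, T.γ v = Sum.inr (Lab2.error, l, r)) ∧
       ∀ u : T.U, (u : Word) <+: (v : Word) → (u : Word) ≠ (v : Word) →
         ∃ l r : T.U, T.γ u = Sum.inr (Lab2.ok, l, r)}

section Stmt19Aux

open Classical in
lemma antichain_finset_sum_le :
    ∀ (N : ℕ) (F : Finset Word), (∑ v ∈ F, v.length) ≤ N →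
      (∀ u ∈ F, ∀ v ∈ F, u <+: v → u = v) →
      ∑ v ∈ F, ((1:ℝ)/2) ^ v.length ≤ 1 := by
  intro N
  induction N using Nat.strong_induction_on with
  | _ N ih =>
    intro F hlen hanti
    by_cases hnil : ([] : Word) ∈ F
    · have hF : F = {[]} := by
        apply Finset.eq_singleton_iff_unique_mem.mpr
        exact ⟨hnil, fun v hv => (hanti _ hnil _ hv List.nil_prefix).symm⟩
      rw [hF]; simp
    · have key : ∀ b : Bool,
          ∑ v ∈ F.filter (fun v => v.headI = b), ((1:ℝ)/2) ^ v.length ≤ 1/2 := by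
        intro b
        set Fb := F.filter (fun v => v.headI = b) with hFb
        have hmem : ∀ v ∈ Fb, v = b :: v.tail := by
          intro v hv
          have hvF : v ∈ F := (Finset.mem_filter.mp hv).1
          have hne : v ≠ [] := fun h => hnil (h ▸ hvF)
          obtain ⟨a, t, rfl⟩ := List.exists_cons_of_ne_nil hne
          have : a = b := by simpa using (Finset.mem_filter.mp hv).2
          simp [this]
        rcases Finset.eq_empty_or_nonempty Fb with h | hne
        · rw [h]; simp
        · set G := Fb.image List.tail with hG
          have hinj : ∀ u ∈ Fb, ∀ v ∈ Fb, u.tail = v.tail → u = v := by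
            intro u hu v hv huv
            rw [hmem u hu, hmem v hv, huv]
          have hsum : ∑ v ∈ Fb, ((1:ℝ)/2)^v.length
              = (1/2) * ∑ u ∈ G, ((1:ℝ)/2)^u.length := by
            rw [hG, Finset.sum_image hinj, Finset.mul_sum]
            apply Finset.sum_congr rfl
            intro v hv
            conv_lhs => rw [hmem v hv]
            rw [List.length_cons, pow_succ]
            ring
          have hGanti : ∀ u ∈ G, ∀ v ∈ G, u <+: v → u = v := by
            intro u hu v hv huv
            obtain ⟨u', hu', rfl⟩ := Finset.mem_image.mp hu
            obtain ⟨v', hv', rfl⟩ := Finset.mem_image.mp hv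
            have h1 : u' <+: v' := by
              rw [hmem u' hu', hmem v' hv']
              exact List.cons_prefix_cons.mpr ⟨rfl, huv⟩
            rw [hanti u' (Finset.mem_filter.mp hu').1 v' (Finset.mem_filter.mp hv').1 h1]
          have hGlen : (∑ u ∈ G, u.length) < N := by
            calc (∑ u ∈ G, u.length) = ∑ v ∈ Fb, v.tail.length := Finset.sum_image hinj
            _ < ∑ v ∈ Fb, v.length := by
                apply Finset.sum_lt_sum_of_nonempty hne
                intro v hv
                conv_rhs => rw [hmem v hv]
                simp
            _ ≤ ∑ v ∈ F, v.length := Finset.sum_le_sum_of_subset (Finset.filter_subset _ _)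
            _ ≤ N := hlen
          have := ih _ hGlen G le_rfl hGanti
          rw [hsum]
          linarith
      have hsplit := Finset.sum_filter_add_sum_filter_not F (fun v => v.headI = false)
        (fun v => ((1:ℝ)/2)^v.length)
      have hcongr : F.filter (fun v => ¬ v.headI = false) = F.filter (fun v => v.headI = true) := by
        apply Finset.filter_congr
        intro v _
        simp
      rw [hcongr] at hsplit
      have k1 := key false
      have k2 := key true
      linarith

/-- minimal error nodes in the subtree rooted at `w`. -/
def MErr (T : LTree Unit Lab2) (w : T.U) : Set T.U :=
  {v | (w : Word) <+: (v : Word) ∧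
     (∃ l r : T.U, T.γ v = Sum.inr (Lab2.error, l, r)) ∧
     ∀ u : T.U, (w : Word) <+: (u : Word) → (u : Word) <+: (v : Word) →
       (u : Word) ≠ (v : Word) → ∃ l r : T.U, T.γ u = Sum.inr (Lab2.ok, l, r)}

variable {T : LTree Unit Lab2}

lemma merr_antichain {w u v : T.U} (hu : u ∈ MErr T w) (hv : v ∈ MErr T w)
    (h : (u : Word) <+: (v : Word)) : u = v := by
  by_cases he : (u : Word) = (v : Word)
  · exact Subtype.ext he
  · obtain ⟨l, r, hok⟩ := hv.2.2 u hu.1 h he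
    obtain ⟨l', r', herr⟩ := hu.2.1
    rw [hok] at herr
    simp at herr

lemma merr_drop {w : T.U} {v : T.U} (hv : v ∈ MErr T w) :
    (v : Word) = (w : Word) ++ ((v : Word)).drop (w : Word).length := by
  obtain ⟨t, ht⟩ := hv.1
  rw [← ht, List.drop_left]

lemma sum_merr_le_one {w : T.U} (F : Finset (MErr T w)) :
    ∑ v ∈ F, ((1:ℝ)/2) ^ (((v : T.U) : Word).length - (w : Word).length) ≤ 1 := by
  classical
  set φ : MErr T w → Word := fun v => (((v : T.U)) : Word).drop (w : Word).length with hφ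
  have hinj : ∀ u ∈ F, ∀ v ∈ F, φ u = φ v → u = v := by
    intro u _ v _ h
    have h1 := merr_drop u.2
    have h2 := merr_drop v.2
    refine Subtype.ext (Subtype.ext ?_)
    rw [h1, h2]
    simp only [hφ] at h
    rw [h]
  have hrw : ∑ v ∈ F, ((1:ℝ)/2) ^ (((v : T.U) : Word).length - (w : Word).length)
      = ∑ u ∈ F.image φ, ((1:ℝ)/2) ^ u.length := by
    rw [Finset.sum_image hinj]
    apply Finset.sum_congr rfl
    intro v _
    simp [hφ, List.length_drop]
  rw [hrw]
  apply antichain_finset_sum_le (∑ u ∈ F.image φ, u.length) _ le_rfl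
  intro a ha b hb hab
  obtain ⟨u, _, rfl⟩ := Finset.mem_image.mp ha
  obtain ⟨v, _, rfl⟩ := Finset.mem_image.mp hb
  have hpre : ((u : T.U) : Word) <+: ((v : T.U) : Word) := by
    rw [merr_drop u.2, merr_drop v.2]
    exact (List.prefix_append_right_inj _).mpr hab
  simp only [hφ]
  rw [merr_antichain u.2 v.2 hpre]

lemma summable_merr {w : T.U} (f : T.U → ℝ) (h0 : ∀ v, 0 ≤ f v)
    (hle : ∀ v : T.U, f v ≤ ((1:ℝ)/2) ^ ((v : Word).length - (w : Word).length)) :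
    Summable (fun v : MErr T w => f v) := by
  apply summable_of_sum_le (c := 1) (fun v => h0 _)
  intro F
  calc ∑ v ∈ F, f v
      ≤ ∑ v ∈ F, ((1:ℝ)/2) ^ (((v : T.U) : Word).length - (w : Word).length) :=
        Finset.sum_le_sum fun v _ => hle _
    _ ≤ 1 := sum_merr_le_one F

/-- the measure of minimal error nodes below `w`, relative to `w`. -/
noncomputable def cfun (T : LTree Unit Lab2) (w : T.U) : ℝ :=
  ∑' v : MErr T w, ((1:ℝ)/2) ^ (((v : T.U) : Word).length - (w : Word).length)

lemma summable_cfun (w : T.U) :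
    Summable (fun v : MErr T w =>
      ((1:ℝ)/2) ^ (((v : T.U) : Word).length - (w : Word).length)) := by
  apply summable_merr (fun u : T.U => ((1:ℝ)/2) ^ ((u : Word).length - (w : Word).length))
  · intro v; positivity
  · intro v; exact le_rfl

lemma cfun_nonneg (w : T.U) : 0 ≤ cfun T w :=
  tsum_nonneg fun v => by positivity

lemma cfun_le_one (w : T.U) : cfun T w ≤ 1 :=
  Summable.tsum_le_of_sum_le (summable_cfun w) sum_merr_le_one


lemma merr_inl {w : T.U} {s : Unit} (h : T.γ w = Sum.inl s) : MErr T w = ∅ := by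
  ext v
  simp only [Set.mem_empty_iff_false, iff_false]
  intro hv
  by_cases he : (w : Word) = (v : Word)
  · obtain ⟨l, r, herr⟩ := hv.2.1
    rw [← Subtype.ext he, h] at herr
    simp at herr
  · obtain ⟨l, r, hok⟩ := hv.2.2 w List.prefix_rfl hv.1 he
    rw [h] at hok
    simp at hok

lemma merr_error {w l r : T.U} (h : T.γ w = Sum.inr (Lab2.error, l, r)) :
    MErr T w = {w} := by
  ext v
  simp only [Set.mem_singleton_iff]
  constructor
  · intro hv
    by_cases he : (w : Word) = (v : Word)
    · exact (Subtype.ext he).symm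
    · obtain ⟨l', r', hok⟩ := hv.2.2 w List.prefix_rfl hv.1 he
      rw [h] at hok
      simp at hok
  · rintro rfl
    exact ⟨List.prefix_rfl, ⟨l, r, h⟩,
      fun u h1 h2 h3 => absurd (h2.eq_of_length_le h1.length_le) h3⟩

lemma merr_ok {w l r : T.U} (h : T.γ w = Sum.inr (Lab2.ok, l, r)) :
    MErr T w = MErr T l ∪ MErr T r := by
  obtain ⟨hl, hr⟩ := T.γ_children w _ l r h
  have hc : ∀ (c : T.U) (b : Bool), (c : Word) = (w : Word) ++ [b] →
      ∀ v : T.U, v ∈ MErr T c → v ∈ MErr T w := by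
    intro c b hcb v hv
    have hwc : (w : Word) <+: (c : Word) := by rw [hcb]; exact List.prefix_append _ _
    refine ⟨hwc.trans hv.1, hv.2.1, ?_⟩
    intro u h1 h2 h3
    rcases List.prefix_or_prefix_of_prefix h2 hv.1 with huc | hcu
    · -- u <+: c
      by_cases hle : (u : Word).length ≤ (w : Word).length
      · have he : (w : Word) = (u : Word) := h1.eq_of_length_le hle
        exact ⟨l, r, by rw [← Subtype.ext he]; exact h⟩
      · have he : (u : Word) = (c : Word) := by
          apply huc.eq_of_length
          have := huc.length_le
          have hclen : (c : Word).length = (w : Word).length + 1 := by rw [hcb]; simp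
          omega
        exact hv.2.2 u (by rw [he]) h2 h3
    · exact hv.2.2 u hcu h2 h3
  ext v
  constructor
  · intro hv
    have hvw : (w : Word) ≠ (v : Word) := by
      intro he
      obtain ⟨l', r', herr⟩ := hv.2.1
      rw [← Subtype.ext he, h] at herr
      simp at herr
    obtain ⟨t, ht⟩ := hv.1
    match t, ht with
    | [], ht => exact absurd (by simpa using ht) hvw
    | b :: t', ht =>
      have hb : (w : Word) ++ [b] <+: (v : Word) := ⟨t', by simpa using ht⟩
      have hmem : ∀ (c : T.U), (c : Word) = (w : Word) ++ [b] → v ∈ MErr T c := by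
        intro c hcb
        refine ⟨hcb ▸ hb, hv.2.1, ?_⟩
        intro u h1 h2 h3
        refine hv.2.2 u ?_ h2 h3
        have : (w : Word) <+: (c : Word) := by rw [hcb]; exact List.prefix_append _ _
        exact this.trans h1
      cases b with
      | false => exact Or.inl (hmem l hl)
      | true => exact Or.inr (hmem r hr)
  · rintro (hv | hv)
    · exact hc l false hl v hv
    · exact hc r true hr v hv

lemma merr_disj {w l r : T.U} (h : T.γ w = Sum.inr (Lab2.ok, l, r)) :
    Disjoint (MErr T l) (MErr T r) := by
  obtain ⟨hl, hr⟩ := T.γ_children w _ l r h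
  rw [Set.disjoint_left]
  intro v hvl hvr
  have h1 := hvl.1
  have h2 := hvr.1
  have : (l : Word) = (r : Word) := by
    rcases List.prefix_or_prefix_of_prefix h1 h2 with h3 | h3
    · exact h3.eq_of_length (by rw [hl, hr]; simp)
    · exact (h3.eq_of_length (by rw [hl, hr]; simp)).symm
  rw [hl, hr] at this
  simp at this

lemma tsum_merr_ok {w l r : T.U} (h : T.γ w = Sum.inr (Lab2.ok, l, r)) (f : T.U → ℝ)
    (hfl : Summable (fun v : MErr T l => f v))
    (hfr : Summable (fun v : MErr T r => f v)) :
    ∑' v : MErr T w, f v = (∑' v : MErr T l, f v) + ∑' v : MErr T r, f v := by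
  rw [tsum_congr_set_coe f (merr_ok h)]
  exact hfl.tsum_union_disjoint (merr_disj h) hfr
/-- finite-depth approximation of `cfun`. -/
noncomputable def cn (T : LTree Unit Lab2) : ℕ → T.U → ℝ
  | 0, _ => 0
  | n+1, w =>
    match T.γ w with
    | Sum.inl _ => 0
    | Sum.inr (Lab2.error, _, _) => 1
    | Sum.inr (Lab2.ok, l, r) => cn T n l / 2 + cn T n r / 2

lemma cn_zero (w : T.U) : cn T 0 w = 0 := rfl

lemma cn_succ_inl {w : T.U} {s : Unit} (n : ℕ) (h : T.γ w = Sum.inl s) :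
    cn T (n+1) w = 0 := by
  simp only [cn]
  rw [h]

lemma cn_succ_error {w l r : T.U} (n : ℕ) (h : T.γ w = Sum.inr (Lab2.error, l, r)) :
    cn T (n+1) w = 1 := by
  simp only [cn]
  rw [h]

lemma cn_succ_ok {w l r : T.U} (n : ℕ) (h : T.γ w = Sum.inr (Lab2.ok, l, r)) :
    cn T (n+1) w = cn T n l / 2 + cn T n r / 2 := by
  simp only [cn]
  rw [h]

lemma cn_nonneg : ∀ (n : ℕ) (w : T.U), 0 ≤ cn T n w := by
  intro n
  induction n with
  | zero => intro w; rw [cn_zero]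
  | succ n ih =>
    intro w
    rcases hγ : T.γ w with s | ⟨s, l, r⟩
    · rw [cn_succ_inl n hγ]
    · cases s with
      | error => rw [cn_succ_error n hγ]; norm_num
      | ok =>
        rw [cn_succ_ok n hγ]
        have := ih l
        have := ih r
        linarith

lemma cn_le_one : ∀ (n : ℕ) (w : T.U), cn T n w ≤ 1 := by
  intro n
  induction n with
  | zero => intro w; rw [cn_zero]; norm_num
  | succ n ih =>
    intro w
    rcases hγ : T.γ w with s | ⟨s, l, r⟩
    · rw [cn_succ_inl n hγ]; norm_num
    · cases s with
      | error => rw [cn_succ_error n hγ]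
      | ok =>
        rw [cn_succ_ok n hγ]
        have := ih l
        have := ih r
        linarith

lemma summable_trunc (w x : T.U) (k : ℕ) (hk : (x : Word).length ≤ (w : Word).length) :
    Summable (fun v : MErr T w =>
      if ((v : T.U) : Word).length < (x : Word).length + k
        then ((1:ℝ)/2) ^ (((v : T.U) : Word).length - (x : Word).length) else 0) := by
  apply summable_merr (fun u : T.U =>
    if (u : Word).length < (x : Word).length + k
      then ((1:ℝ)/2) ^ ((u : Word).length - (x : Word).length) else 0)
  · intro v
    split <;> positivity
  · intro v
    split
    · apply pow_le_pow_of_le_one (by norm_num) (by norm_num)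
      exact Nat.sub_le_sub_left hk _
    · positivity

lemma trunc_le_cn : ∀ (n : ℕ) (w : T.U),
    (∑' v : MErr T w, (if ((v : T.U) : Word).length < (w : Word).length + n
        then ((1:ℝ)/2) ^ (((v : T.U) : Word).length - (w : Word).length) else 0))
      ≤ cn T n w := by
  intro n
  induction n with
  | zero =>
    intro w
    rw [cn_zero]
    have hz : ∀ v : MErr T w,
        (if ((v : T.U) : Word).length < (w : Word).length + 0
          then ((1:ℝ)/2) ^ (((v : T.U) : Word).length - (w : Word).length) else 0) = 0 := by
      intro v
      have := v.2.1.length_le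
      rw [if_neg (by omega)]
    rw [tsum_congr hz, tsum_zero]
  | succ n ih =>
    intro w
    rcases hγ : T.γ w with s | ⟨s, l, r⟩
    · rw [cn_succ_inl n hγ,
        tsum_congr_set_coe (fun u : T.U => if (u : Word).length < (w : Word).length + (n+1)
          then ((1:ℝ)/2) ^ ((u : Word).length - (w : Word).length) else 0) (merr_inl hγ),
        tsum_empty]
    · cases s with
      | error =>
        rw [cn_succ_error n hγ,
          tsum_congr_set_coe (fun u : T.U => if (u : Word).length < (w : Word).length + (n+1)
            then ((1:ℝ)/2) ^ ((u : Word).length - (w : Word).length) else 0) (merr_error hγ),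
          tsum_singleton w (fun u : T.U => if (u : Word).length < (w : Word).length + (n+1)
            then ((1:ℝ)/2) ^ ((u : Word).length - (w : Word).length) else 0)]
        rw [if_pos (by omega)]
        simp
      | ok =>
        obtain ⟨hl, hr⟩ := T.γ_children w _ l r hγ
        have hll : (l : Word).length = (w : Word).length + 1 := by rw [hl]; simp
        have hrl : (r : Word).length = (w : Word).length + 1 := by rw [hr]; simp
        have branch : ∀ (c : T.U), (c : Word).length = (w : Word).length + 1 →
            (∑' v : MErr T c, (if ((v : T.U) : Word).length < (w : Word).length + (n+1)
              then ((1:ℝ)/2) ^ (((v : T.U) : Word).length - (w : Word).length) else 0))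
            ≤ cn T n c / 2 := by
          intro c hcl
          have he : (∑' v : MErr T c, (if ((v : T.U) : Word).length < (w : Word).length + (n+1)
              then ((1:ℝ)/2) ^ (((v : T.U) : Word).length - (w : Word).length) else 0))
              = (1/2) * ∑' v : MErr T c, (if ((v : T.U) : Word).length < (c : Word).length + n
              then ((1:ℝ)/2) ^ (((v : T.U) : Word).length - (c : Word).length) else 0) := by
            rw [← tsum_mul_left]
            apply tsum_congr
            intro v
            have h1 : (c : Word).length ≤ ((v : T.U) : Word).length := v.2.1.length_le
            by_cases hcond : ((v : T.U) : Word).length < (w : Word).length + (n+1)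
            · rw [if_pos hcond, if_pos (by omega)]
              have hx : ((v : T.U) : Word).length - (w : Word).length
                  = (((v : T.U) : Word).length - (c : Word).length) + 1 := by omega
              rw [hx, pow_succ]
              ring
            · rw [if_neg hcond, if_neg (by omega)]
              ring
          rw [he]
          have := ih c
          linarith
        rw [cn_succ_ok n hγ,
          tsum_merr_ok hγ (fun u : T.U => if (u : Word).length < (w : Word).length + (n+1)
            then ((1:ℝ)/2) ^ ((u : Word).length - (w : Word).length) else 0)
            (summable_trunc l w (n+1) (by omega)) (summable_trunc r w (n+1) (by omega))]
        have b1 := branch l hll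
        have b2 := branch r hrl
        linarith

lemma cfun_le {w : T.U} {x : ℝ} (h : ∀ n, cn T n w ≤ x) : cfun T w ≤ x := by
  apply Summable.tsum_le_of_sum_le (summable_cfun w)
  intro F
  set n := (F.sup fun v => ((v : T.U) : Word).length) + 1 with hn
  have h1 : ∑ v ∈ F, ((1:ℝ)/2) ^ (((v : T.U) : Word).length - (w : Word).length)
      = ∑ v ∈ F, (if ((v : T.U) : Word).length < (w : Word).length + n
        then ((1:ℝ)/2) ^ (((v : T.U) : Word).length - (w : Word).length) else 0) := by
    apply Finset.sum_congr rfl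
    intro v hv
    rw [if_pos]
    have h2 : ((v : T.U) : Word).length ≤ F.sup fun v : MErr T w => ((v : T.U) : Word).length :=
      Finset.le_sup (f := fun v : MErr T w => ((v : T.U) : Word).length) hv
    omega
  rw [h1]
  calc ∑ v ∈ F, (if ((v : T.U) : Word).length < (w : Word).length + n
        then ((1:ℝ)/2) ^ (((v : T.U) : Word).length - (w : Word).length) else 0)
      ≤ ∑' v : MErr T w, (if ((v : T.U) : Word).length < (w : Word).length + n
        then ((1:ℝ)/2) ^ (((v : T.U) : Word).length - (w : Word).length) else 0) := by
        apply Summable.sum_le_tsum F (fun v _ => ?_) (summable_trunc w w n le_rfl)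
        split <;> positivity
    _ ≤ cn T n w := trunc_le_cn n w
    _ ≤ x := h n
lemma cfun_inl {w : T.U} {s : Unit} (h : T.γ w = Sum.inl s) : cfun T w = 0 := by
  rw [cfun, tsum_congr_set_coe
    (fun u : T.U => ((1:ℝ)/2) ^ ((u : Word).length - (w : Word).length)) (merr_inl h),
    tsum_empty]

lemma cfun_error {w l r : T.U} (h : T.γ w = Sum.inr (Lab2.error, l, r)) :
    cfun T w = 1 := by
  rw [cfun, tsum_congr_set_coe
    (fun u : T.U => ((1:ℝ)/2) ^ ((u : Word).length - (w : Word).length)) (merr_error h),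
    tsum_singleton w (fun u : T.U => ((1:ℝ)/2) ^ ((u : Word).length - (w : Word).length))]
  simp

lemma summable_shift {w : T.U} (x : T.U) (hk : (x : Word).length ≤ (w : Word).length) :
    Summable (fun v : MErr T w =>
      ((1:ℝ)/2) ^ (((v : T.U) : Word).length - (x : Word).length)) := by
  apply summable_merr (fun u : T.U => ((1:ℝ)/2) ^ ((u : Word).length - (x : Word).length))
  · intro v; positivity
  · intro v
    apply pow_le_pow_of_le_one (by norm_num) (by norm_num)
    exact Nat.sub_le_sub_left hk _

lemma cfun_ok {w l r : T.U} (h : T.γ w = Sum.inr (Lab2.ok, l, r)) :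
    cfun T w = cfun T l / 2 + cfun T r / 2 := by
  obtain ⟨hl, hr⟩ := T.γ_children w _ l r h
  have hll : (l : Word).length = (w : Word).length + 1 := by rw [hl]; simp
  have hrl : (r : Word).length = (w : Word).length + 1 := by rw [hr]; simp
  have branch : ∀ (c : T.U), (c : Word).length = (w : Word).length + 1 →
      (∑' v : MErr T c, ((1:ℝ)/2) ^ (((v : T.U) : Word).length - (w : Word).length))
        = cfun T c / 2 := by
    intro c hcl
    have he : ∀ v : MErr T c, ((1:ℝ)/2) ^ (((v : T.U) : Word).length - (w : Word).length)
        = (1/2) * ((1:ℝ)/2) ^ (((v : T.U) : Word).length - (c : Word).length) := by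
      intro v
      have h1 := v.2.1.length_le
      have hx : ((v : T.U) : Word).length - (w : Word).length
          = (((v : T.U) : Word).length - (c : Word).length) + 1 := by omega
      rw [hx, pow_succ]
      ring
    rw [tsum_congr he, tsum_mul_left, cfun]
    ring
  rw [cfun, tsum_merr_ok h
    (fun u : T.U => ((1:ℝ)/2) ^ ((u : Word).length - (w : Word).length))
    (summable_shift w (by omega)) (summable_shift w (by omega)),
    branch l hll, branch r hrl]

lemma merr_root : MErr T T.root = minimalError T := by
  ext v
  constructor
  · rintro ⟨_, h2, h3⟩
    exact ⟨h2, fun u hp hne => h3 u List.nil_prefix hp hne⟩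
  · rintro ⟨h2, h3⟩
    exact ⟨List.nil_prefix, h2, fun u _ hp hne => h3 u hp hne⟩

lemma cn_le_of_win (S : Set (A2.A × T.U × I))
    (hS : ∀ q ∈ S, ∃ δa ∈ A2.Δ q.1, ∃ d : A2.A → T.U → I,
      dlift halfAdd d δa (T.γ q.2.1) ≤ q.2.2 ∧
      ∀ (b : A2.A) (v : T.U) (ε' : I), d b v ≤ ε' → (b, v, ε') ∈ S) :
    ∀ (n : ℕ), ∀ q ∈ S, cn T n q.2.1 ≤ (q.2.2 : ℝ) := by
  intro n
  induction n with
  | zero =>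
    intro q _
    rw [cn_zero]
    exact q.2.2.2.1
  | succ n ih =>
    intro q hq
    obtain ⟨δa, hδ, d, hd, hsucc⟩ := hS q hq
    obtain ⟨a, w, ε⟩ := q
    have hδ' : δa = Sum.inl () ∨ δa = Sum.inr (Lab2.ok, (), ()) := hδ
    have hone : ∀ {x : I}, (1 : I) ≤ x → cn T (n+1) w ≤ (x : ℝ) := by
      intro x hx
      have h1 : (1:ℝ) ≤ (x:ℝ) := hx
      exact le_trans (cn_le_one _ _) h1
    rcases hδ' with rfl | rfl
    · rcases hγ : T.γ w with s | ⟨s, l, r⟩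
      · rw [cn_succ_inl n hγ]
        exact ε.2.1
      · rw [hγ] at hd
        simp only [dlift] at hd
        exact hone hd
    · rcases hγ : T.γ w with s | ⟨s, l, r⟩
      · rw [hγ] at hd
        simp only [dlift] at hd
        exact hone hd
      · cases s with
        | error =>
          rw [hγ] at hd
          simp only [dlift] at hd
          rw [if_neg (by simp)] at hd
          exact hone hd
        | ok =>
          rw [hγ] at hd
          simp only [dlift, if_pos] at hd
          have h1 : ((), l, d () l) ∈ S := hsucc () l (d () l) le_rfl
          have h2 : ((), r, d () r) ∈ S := hsucc () r (d () r) le_rfl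
          have i1 : cn T n l ≤ ((d () l : I) : ℝ) := ih _ h1
          have i2 : cn T n r ≤ ((d () r : I) : ℝ) := ih _ h2
          rw [cn_succ_ok n hγ]
          have hd' : ((d () l : I) : ℝ)/2 + ((d () r : I) : ℝ)/2 ≤ (ε : ℝ) := hd
          linarith

end Stmt19Aux

/-- Measuring failed executions: with the lifting `f(x,y) = ½x + ½y`, the
position `(a₀, root, ε)` is winning for Verifier in the ε-acceptance game iff
`ε ≥ Σ_{v ∈ E'} 2^{-|v|}` where `E'` is the set of minimal error nodes. -/
theorem stmt19 (T : LTree Unit Lab2) (ε : I) :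
    EAccWin halfAdd A2 T (A2.a0, T.root, ε) ↔
      (∑' v : minimalError T, ((1 : ℝ) / 2) ^ (((v : T.U) : Word).length)) ≤ (ε : ℝ) := by
  classical
  have hsum : (∑' v : minimalError T, ((1 : ℝ) / 2) ^ (((v : T.U) : Word).length))
      = cfun T T.root := by
    have h1 : (∑' v : minimalError T, ((1 : ℝ) / 2) ^ (((v : T.U) : Word).length))
        = ∑' v : MErr T T.root, ((1:ℝ)/2) ^ (((v : T.U) : Word).length) :=
      (tsum_congr_set_coe (fun u : T.U => ((1:ℝ)/2) ^ ((u : Word).length)) merr_root).symm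
    rw [h1, cfun]
    apply tsum_congr
    intro v
    have h2 : (T.root : Word).length = 0 := rfl
    rw [h2, Nat.sub_zero]
  rw [hsum]
  constructor
  · rintro ⟨S, hmem, hstep⟩
    apply cfun_le
    intro n
    exact cn_le_of_win S hstep n _ hmem
  · intro h
    refine ⟨{p : A2.A × T.U × I | cfun T p.2.1 ≤ (p.2.2 : ℝ)}, h, ?_⟩
    rintro ⟨a, w, ε'⟩ hq
    have hq' : cfun T w ≤ (ε' : ℝ) := hq
    rcases hγ : T.γ w with s | ⟨s, l, r⟩
    · refine ⟨Sum.inl (), Or.inl rfl, fun _ _ => 1, ?_, ?_⟩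
      · simp only [dlift]
        obtain ⟨⟩ := s
        simp only [if_true]
        exact ε'.2.1
      · intro b v ε'' h'
        have h1 : (1:ℝ) ≤ (ε'' : ℝ) := h'
        exact le_trans (cfun_le_one v) h1
    · cases s with
      | error =>
        have hc : cfun T w = 1 := cfun_error hγ
        refine ⟨Sum.inl (), Or.inl rfl, fun _ _ => 1, ?_, ?_⟩
        · simp only [dlift]
          show (1:I) ≤ ε'
          have h1 : (1:ℝ) ≤ (ε' : ℝ) := by rw [← hc]; exact hq'
          exact h1
        · intro b v ε'' h'
          have h1 : (1:ℝ) ≤ (ε'' : ℝ) := h'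
          exact le_trans (cfun_le_one v) h1
      | ok =>
        have hc : cfun T w = cfun T l / 2 + cfun T r / 2 := cfun_ok hγ
        have hlr : r ≠ l := by
          obtain ⟨hl, hr⟩ := T.γ_children w _ l r hγ
          intro h'
          rw [← h', hr] at hl
          simp at hl
        set dl : I := ⟨cfun T l, Set.mem_Icc.mpr ⟨cfun_nonneg l, cfun_le_one l⟩⟩ with hdl
        set dr : I := ⟨cfun T r, Set.mem_Icc.mpr ⟨cfun_nonneg r, cfun_le_one r⟩⟩ with hdr
        refine ⟨Sum.inr (Lab2.ok, (), ()), Or.inr rfl,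
          fun _ v => if v = l then dl else if v = r then dr else 1, ?_, ?_⟩
        · simp only [dlift]
          rw [if_neg hlr]
          simp only [if_true]
          show halfAdd dl dr ≤ ε'
          have h1 : (cfun T l)/2 + (cfun T r)/2 ≤ (ε' : ℝ) := by rw [← hc]; exact hq'
          exact h1
        · intro b v ε'' h'
          beta_reduce at h'
          by_cases h1 : v = l
          · subst h1
            rw [if_pos rfl] at h'
            have h2 : cfun T v ≤ (ε'' : ℝ) := h'
            exact h2
          · rw [if_neg h1] at h'
            by_cases h2 : v = r
            · subst h2
              rw [if_pos rfl] at h'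
              have h3 : cfun T v ≤ (ε'' : ℝ) := h'
              exact h3
            · rw [if_neg h2] at h'
              have h3 : (1:ℝ) ≤ (ε'' : ℝ) := h'
              exact le_trans (cfun_le_one v) h3
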